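/- Let G be an edge-critical uniquely 3-colorable graph without separating 3-cycles, G₀ a uniquely 3-colorable subgraph, and H₁ a maximal triangle-subgraph of G with E(G₀) ∩ E(H₁) = ∅. If G₀ and H₁ share a common vertex v, then there is at most one edge of G between V(G₀) \ {v} and V(H₁) \ {v}; if G₀ and H₁ are vertex-disjoint, then there are at most 3 edges of G between V(G₀) and V(H₁). -/

import Mathlib

open SimpleGraph

/-- `G` is uniquely `k`-colorable: its chromatic number is `k` and all proper
`k`-colorings induce the same partition of the vertex set into color classes. -/
def UniquelyKColorable {V : Type} (G : SimpleGraph V) (k : ℕ) : Prop :=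
  G.chromaticNumber = k ∧
    ∀ c₁ c₂ : G.Coloring (Fin k), ∀ u v : V, c₁ u = c₁ v ↔ c₂ u = c₂ v

/-- `G` is an edge-critical uniquely `k`-colorable graph. -/
def EdgeCritical {V : Type} (G : SimpleGraph V) (k : ℕ) : Prop :=
  UniquelyKColorable G k ∧
    ∀ e ∈ G.edgeSet, ¬ UniquelyKColorable (G.deleteEdges {e}) k

/-- A combinatorial plane embedding of `G`: a family of faces, each with a closed
boundary walk, such that every edge lies on face boundaries exactly twice in total,
and Euler's formula holds. -/
structure PlaneEmbedding {V : Type} [DecidableEq V] (G : SimpleGraph V) where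
  Faces : Type
  [facesFintype : Fintype Faces]
  boundary : Faces → Σ v : V, G.Walk v v
  edge_count : ∀ e ∈ G.edgeSet, (∑ f : Faces, ((boundary f).2.edges.count e)) = 2
  euler : Nat.card V + Nat.card Faces = G.edgeSet.ncard + 1 + Nat.card G.ConnectedComponent

attribute [instance] PlaneEmbedding.facesFintype

/-- The degree of a face: the length of its boundary walk (cut edges counted twice). -/
def PlaneEmbedding.fdeg {V : Type} [DecidableEq V] {G : SimpleGraph V}
    (emb : PlaneEmbedding G) (f : emb.Faces) : ℕ :=
  (emb.boundary f).2.length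

def Planar {V : Type} [DecidableEq V] (G : SimpleGraph V) : Prop :=
  Nonempty (PlaneEmbedding G)

/-- Outerplanar: a plane embedding with one face incident with all vertices. -/
def Outerplanar {V : Type} [DecidableEq V] (G : SimpleGraph V) : Prop :=
  ∃ emb : PlaneEmbedding G, ∃ f : emb.Faces, ∀ v : V, v ∈ (emb.boundary f).2.support

def MaximalOuterplanar {V : Type} [DecidableEq V] (G : SimpleGraph V) : Prop :=
  Outerplanar G ∧ ∀ u v : V, u ≠ v → ¬ G.Adj u v →
    ¬ Outerplanar (G ⊔ SimpleGraph.fromEdgeSet {s(u, v)})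

/-- `s` is the edge set of a cycle of `G`. -/
def IsCycleSet {V : Type} (G : SimpleGraph V) (s : Set (Sym2 V)) : Prop :=
  ∃ (v : V) (w : G.Walk v v), w.IsCycle ∧ {e | e ∈ w.edges} = s

/-- Two cycles (given by their edge sets) are dependent: joined by a chain of cycles
in which consecutive cycles share an edge and all intermediate cycles have 4 vertices. -/
def Dependent {V : Type} (G : SimpleGraph V) (s s' : Set (Sym2 V)) : Prop :=
  ∃ (t : ℕ) (C : Fin (t + 2) → Set (Sym2 V)),
    (∀ i, IsCycleSet G (C i)) ∧ C 0 = s ∧ C (Fin.last (t + 1)) = s' ∧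
    (∀ i : Fin (t + 1), (C i.castSucc ∩ C i.succ).Nonempty) ∧
    ∀ i : Fin (t + 2), i ≠ 0 → i ≠ Fin.last (t + 1) → (C i).ncard = 4

/-- `G` has no separating 3-cycle: deleting the vertices of any triangle leaves a
connected graph. -/
def NoSeparating3Cycle {V : Type} (G : SimpleGraph V) : Prop :=
  ∀ s : Finset V, G.IsNClique 3 s → (G.induce {v : V | v ∉ s}).Connected

/-- `H` is a triangle-subgraph of `G`: the union of a sequence of triangles each of
which (after the first) shares an edge with an earlier one. -/
def IsTriangleSubgraph {V : Type} (G : SimpleGraph V) (H : G.Subgraph) : Prop :=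
  ∃ (t : ℕ) (T : Fin (t + 1) → Finset V),
    (∀ i, G.IsNClique 3 (T i)) ∧
    (∀ j : Fin (t + 1), j ≠ 0 →
      ∃ i : Fin (t + 1), i < j ∧ ((T i : Set V) ∩ (T j : Set V)).ncard = 2) ∧
    H = ⨆ i, (⊤ : G.Subgraph).induce (T i : Set V)

def MaximalTriangleSubgraph {V : Type} (G : SimpleGraph V) (H : G.Subgraph) : Prop :=
  IsTriangleSubgraph G H ∧ ∀ H' : G.Subgraph, IsTriangleSubgraph G H' → ¬ H < H'

/-- The set of edges of `G` with one end in `A` and the other in `B`. -/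
def edgesBetween {V : Type} (G : SimpleGraph V) (A B : Set V) : Set (Sym2 V) :=
  {e | ∃ a ∈ A, ∃ b ∈ B, G.Adj a b ∧ e = s(a, b)}

section Aux

open SimpleGraph

private lemma fin3_eq (a b x y : Fin 3) (hab : a ≠ b) (hxa : x ≠ a) (hxb : x ≠ b)
    (hya : y ≠ a) (hyb : y ≠ b) : x = y := by revert a b x y; decide

private lemma fin3_third (a b z x : Fin 3) (hab : a ≠ b) (hza : z ≠ a) (hzb : z ≠ b)
    (hxa : x ≠ a) (hxb : x ≠ b) : x = z := by revert a b z x; decide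

private lemma fin4_choose : ∀ i j : Fin 4, i ≠ j →
    ∃ k l : Fin 4, k ≠ l ∧ k ≠ i ∧ k ≠ j ∧ l ≠ i ∧ l ≠ j := by decide

private lemma core4 (a b : Fin 4 → Fin 3) (P Q : Fin 4 → Fin 4 → Fin 3)
    (h1 : ∀ m, P m m = Q m m)
    (h2 : ∀ m i, i ≠ m → P m i ≠ Q m i)
    (h3 : ∀ m i j, P m i = P m j ↔ a i = a j)
    (h4 : ∀ m i j, Q m i = Q m j ↔ b i = b j)
    (h5 : ∀ i, a i ≠ b i) : False := by
  have hpairs : ∀ i j, i ≠ j → ¬(a i = a j ∧ b i = b j) := by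
    rintro i j hij ⟨ha, hb⟩
    have e1 : P i j = P i i := (h3 i j i).mpr ha.symm
    have e2 : Q i j = Q i i := (h4 i j i).mpr hb.symm
    exact h2 i j (Ne.symm hij) (e1.trans ((h1 i).trans e2.symm))
  obtain ⟨i, j, hij, hbij⟩ := Fintype.exists_ne_map_eq_of_card_lt b (by simp)
  have haij : a i ≠ a j := fun h => hpairs i j hij ⟨h, hbij⟩
  obtain ⟨k, l, hkl, hki, hkj, hli, hlj⟩ := fin4_choose i j hij
  have hbi_ai : b i ≠ a i := (h5 i).symm
  have hbi_aj : b i ≠ a j := by rw [hbij]; exact (h5 j).symm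
  -- facts for an index m distinct from i and j
  have key : ∀ m, m ≠ i → m ≠ j →
      (a m = a i ∧ b m = a j) ∨ (a m = a j ∧ b m = a i) := by
    intro m hmi hmj
    have hQiPi : Q m i ≠ P m i := (h2 m i (Ne.symm hmi)).symm
    have hQjQi : Q m j = Q m i := (h4 m j i).mpr hbij.symm
    have hQiPj : Q m i ≠ P m j := by
      intro h
      exact h2 m j (Ne.symm hmj) (hQjQi.trans h).symm
    have hPiPj : P m i ≠ P m j := fun h => haij ((h3 m i j).mp h)
    -- b m ≠ b i
    have hbm : b m ≠ b i := by
      intro hbm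
      have e1 : Q m m = Q m i := (h4 m m i).mpr hbm
      have e2 : P m m = Q m i := (h1 m).trans e1
      have e3 : P m m ≠ P m i := by rw [e2]; exact hQiPi
      have e4 : P m m ≠ P m j := by rw [e2]; exact hQiPj
      have e5 : a m ≠ a i := fun h => e3 ((h3 m m i).mpr h)
      have e6 : a m ≠ a j := fun h => e4 ((h3 m m j).mpr h)
      have : a m = b i := fin3_third (a i) (a j) (b i) (a m) haij hbi_ai hbi_aj e5 e6
      exact (h5 m) (by rw [this, ← hbm])
    -- a m ≠ b i
    have ham : a m ≠ b i := by
      intro ham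
      have e3 : P m m ≠ P m i := fun h => hbi_ai (ham ▸ (h3 m m i).mp h)
      have e4 : P m m ≠ P m j := fun h => hbi_aj (ham ▸ (h3 m m j).mp h)
      have e5 : P m m = Q m i :=
        fin3_eq (P m i) (P m j) (P m m) (Q m i) hPiPj e3 e4 hQiPi hQiPj
      have : Q m m = Q m i := (h1 m).symm.trans e5
      exact hbm ((h4 m m i).mp this)
    have ham' : a m = a i ∨ a m = a j := by
      by_cases h : a m = a i
      · exact Or.inl h
      · exact Or.inr (fin3_third (a i) (b i) (a j) (a m) (h5 i) haij.symm hbi_aj.symm h ham)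
    have hbm' : b m = a i ∨ b m = a j := by
      by_cases h : b m = a i
      · exact Or.inl h
      · exact Or.inr (fin3_third (a i) (b i) (a j) (b m) (h5 i) haij.symm hbi_aj.symm h hbm)
    rcases ham' with h | h
    · refine Or.inl ⟨h, ?_⟩
      rcases hbm' with h' | h'
      · exact absurd (h.trans h'.symm) (h5 m)
      · exact h'
    · refine Or.inr ⟨h, ?_⟩
      rcases hbm' with h' | h'
      · exact h'
      · exact absurd (h.trans h'.symm) (h5 m)
  rcases key k hki hkj with ⟨hk1, hk2⟩ | ⟨hk1, hk2⟩ <;>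
    rcases key l hli hlj with ⟨hl1, hl2⟩ | ⟨hl1, hl2⟩
  · exact hpairs k l hkl ⟨hk1.trans hl1.symm, hk2.trans hl2.symm⟩
  · -- a k = a i, b k = a j, a l = a j, b l = a i
    have hQiPi : Q k i ≠ P k i := (h2 k i (Ne.symm hki)).symm
    have hQjQi : Q k j = Q k i := (h4 k j i).mpr hbij.symm
    have hQiPj : Q k i ≠ P k j := fun h => h2 k j (Ne.symm hkj) (hQjQi.trans h).symm
    have hPiPj : P k i ≠ P k j := fun h => haij ((h3 k i j).mp h)
    have e1 : P k l = P k j := (h3 k l j).mpr hl1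
    have e2 : Q k l ≠ Q k i := fun h => hbi_ai.symm (hl2.symm.trans ((h4 k l i).mp h))
    have e3 : Q k k = P k i := (h1 k).symm.trans ((h3 k k i).mpr hk1)
    have e4 : Q k l ≠ P k i := by
      intro h
      have : Q k l = Q k k := h.trans e3.symm
      have h' : b l = b k := (h4 k l k).mp this
      rw [hl2, hk2] at h'; exact haij h'
    have e5 : Q k l = P k j :=
      fin3_third (P k i) (Q k i) (P k j) (Q k l) hQiPi.symm hPiPj.symm hQiPj.symm e4 e2
    exact h2 k l (Ne.symm hkl) (by rw [e1, e5])
  · -- a k = a j, b k = a i, a l = a i, b l = a j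
    have hQiPi : Q k i ≠ P k i := (h2 k i (Ne.symm hki)).symm
    have hQjQi : Q k j = Q k i := (h4 k j i).mpr hbij.symm
    have hQiPj : Q k i ≠ P k j := fun h => h2 k j (Ne.symm hkj) (hQjQi.trans h).symm
    have hPiPj : P k i ≠ P k j := fun h => haij ((h3 k i j).mp h)
    have e1 : P k l = P k i := (h3 k l i).mpr hl1
    have e2 : Q k l ≠ Q k i := fun h => hbi_aj.symm (hl2.symm.trans ((h4 k l i).mp h))
    have e3 : Q k k = P k j := (h1 k).symm.trans ((h3 k k j).mpr hk1)
    have e4 : Q k l ≠ P k j := by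
      intro h
      have h' : b l = b k := (h4 k l k).mp (h.trans e3.symm)
      rw [hl2, hk2] at h'; exact haij h'.symm
    have e5 : Q k l = P k i :=
      fin3_third (P k j) (Q k i) (P k i) (Q k l) hQiPj.symm hPiPj hQiPi.symm e4 e2
    exact h2 k l (Ne.symm hkl) (by rw [e1, e5])
  · exact hpairs k l hkl ⟨hk1.trans hl1.symm, hk2.trans hl2.symm⟩

end Aux


/-- (Theorem 3.6(ii)) With `G₀` a uniquely 3-colorable subgraph and `H₁` an
edge-disjoint maximal triangle-subgraph: if they share a common vertex `v` there is
at most one edge between `V(G₀) \ {v}` and `V(H₁) \ {v}`; if they are vertex-disjoint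
there are at most 3 edges between `V(G₀)` and `V(H₁)`. -/
theorem stmt_12 {V : Type} (G : SimpleGraph V) (hG : EdgeCritical G 3)
    (hsep : NoSeparating3Cycle G)
    (G₀ H₁ : G.Subgraph) (h₀ : UniquelyKColorable G₀.coe 3)
    (h₁ : MaximalTriangleSubgraph G H₁)
    (hdisj : G₀.edgeSet ∩ H₁.edgeSet = ∅) :
    (∀ v ∈ G₀.verts ∩ H₁.verts,
        (edgesBetween G (G₀.verts \ {v}) (H₁.verts \ {v})).ncard ≤ 1) ∧
      (G₀.verts ∩ H₁.verts = ∅ →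
        (edgesBetween G G₀.verts H₁.verts).ncard ≤ 3) := by
  classical
  obtain ⟨⟨hGchrom, hGuniq⟩, hcritical⟩ := hG
  obtain ⟨h₀chrom, h₀uniq⟩ := h₀
  obtain ⟨hH₁tri, hH₁max⟩ := h₁
  -- canonical coloring of G
  obtain ⟨c⟩ : G.Colorable 3 := chromaticNumber_le_iff_colorable.mp (le_of_eq hGchrom)
  -- rigidity of G₀
  have rigid₀ : ∀ d : V → Fin 3, (∀ a b : V, G₀.Adj a b → d a ≠ d b) →
      ∀ u w : V, u ∈ G₀.verts → w ∈ G₀.verts → (d u = d w ↔ c u = c w) := by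
    intro d hd u w hu hw
    exact h₀uniq
      (SimpleGraph.Coloring.mk (fun z => d z.1) (fun {z₁ z₂} h => hd _ _ h))
      (SimpleGraph.Coloring.mk (fun z => c z.1) (fun {z₁ z₂} h => c.valid (G₀.adj_sub h)))
      ⟨u, hu⟩ ⟨w, hw⟩
  -- triangle-subgraph structure of H₁
  obtain ⟨t, T, hTcl, hTchain, hHeq⟩ := hH₁tri
  have hverts : H₁.verts = ⋃ i, (T i : Set V) := by
    rw [hHeq, SimpleGraph.Subgraph.verts_iSup]
    simp only [SimpleGraph.Subgraph.induce_verts]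
  have hadjT : ∀ i : Fin (t + 1), ∀ a b : V, a ∈ T i → b ∈ T i → a ≠ b → H₁.Adj a b := by
    intro i a b ha hb hne
    rw [hHeq, SimpleGraph.Subgraph.iSup_adj]
    refine ⟨i, ?_⟩
    rw [SimpleGraph.Subgraph.induce_adj]
    exact ⟨ha, hb, (SimpleGraph.Subgraph.top_adj).mpr ((hTcl i).1 ha hb hne)⟩
  -- rigidity of H₁ (chain induction), per-level version
  have key' : ∀ n : ℕ, ∀ d : V → Fin 3,
      (∀ i : Fin (t + 1), i.1 ≤ n → ∀ a b : V, a ∈ T i → b ∈ T i → a ≠ b → d a ≠ d b) →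
      ∀ i j : Fin (t + 1), ∀ u w : V, i.1 ≤ n → j.1 ≤ n →
        u ∈ T i → w ∈ T j → (d u = d w ↔ c u = c w) := by
    intro n
    induction n using Nat.strong_induction_on with
    | _ n IH =>
      intro d hd
      have same : ∀ j : Fin (t + 1), j.1 ≤ n → ∀ u w : V, u ∈ T j → w ∈ T j →
          (d u = d w ↔ c u = c w) := by
        intro j hj u w hu hw
        by_cases huw : u = w
        · simp [huw]
        · exact iff_of_false (hd j hj u w hu hw huw) (c.valid ((hTcl j).1 hu hw huw))
      have step : ∀ i j : Fin (t + 1), ∀ u w : V, i.1 < n → j.1 = n →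
          u ∈ T i → w ∈ T j → (d u = d w ↔ c u = c w) := by
        intro i j u w hi hj hu hw
        have hn1 : 1 ≤ n := by omega
        have hj0 : j ≠ 0 := by
          intro h
          rw [h] at hj
          simp at hj
          omega
        obtain ⟨i₀, hi₀lt, hcard⟩ := hTchain j hj0
        obtain ⟨p, q, hpq, hset⟩ := Set.ncard_eq_two.mp hcard
        have hpmem : p ∈ (T i₀ : Set V) ∩ (T j : Set V) := by rw [hset]; left; rfl
        have hqmem : q ∈ (T i₀ : Set V) ∩ (T j : Set V) := by rw [hset]; right; rfl
        have hpi₀ : p ∈ T i₀ := hpmem.1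
        have hpj : p ∈ T j := hpmem.2
        have hqi₀ : q ∈ T i₀ := hqmem.1
        have hqj : q ∈ T j := hqmem.2
        have hi₀n : i₀.1 < n := by
          have : i₀.1 < j.1 := hi₀lt
          omega
        have IH' := IH (n - 1) (by omega) d
          (fun i' hi' a b ha hb hne => hd i' (by omega) a b ha hb hne)
        by_cases hwp : w = p
        · exact IH' i i₀ u w (by omega) (by omega) hu (hwp ▸ hpi₀)
        by_cases hwq : w = q
        · exact IH' i i₀ u w (by omega) (by omega) hu (hwq ▸ hqi₀)
        have hcpq : c p ≠ c q := c.valid ((hTcl j).1 hpj hqj hpq)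
        have hcpw : c p ≠ c w := c.valid ((hTcl j).1 hpj hw (fun h => hwp h.symm))
        have hcqw : c q ≠ c w := c.valid ((hTcl j).1 hqj hw (fun h => hwq h.symm))
        have hdpq : d p ≠ d q := hd j (by omega) p q hpj hqj hpq
        have hdpw : d p ≠ d w := hd j (by omega) p w hpj hw (fun h => hwp h.symm)
        have hdqw : d q ≠ d w := hd j (by omega) q w hqj hw (fun h => hwq h.symm)
        have iup := IH' i i₀ u p (by omega) (by omega) hu hpi₀
        have iuq := IH' i i₀ u q (by omega) (by omega) hu hqi₀
        by_cases h1 : c u = c p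
        · exact iff_of_false (fun h2 => hdpw ((iup.mpr h1).symm.trans h2))
            (fun h2 => hcpw (h1.symm.trans h2))
        by_cases h2 : c u = c q
        · exact iff_of_false (fun h3 => hdqw ((iuq.mpr h2).symm.trans h3))
            (fun h3 => hcqw (h2.symm.trans h3))
        · have hcu : c u = c w :=
            fin3_third (c p) (c q) (c w) (c u) hcpq hcpw.symm hcqw.symm h1 h2
          have hdu : d u = d w :=
            fin3_eq (d p) (d q) (d u) (d w) hdpq (fun h => h1 (iup.mp h))
              (fun h => h2 (iuq.mp h)) hdpw.symm hdqw.symm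
          exact iff_of_true hdu hcu
      intro i j u w hi hj hu hw
      by_cases hin : i.1 < n
      · by_cases hjn : j.1 < n
        · rcases Nat.eq_zero_or_pos n with h0 | h0
          · omega
          · exact IH (n - 1) (by omega) d
              (fun i' hi' a b ha hb hne => hd i' (by omega) a b ha hb hne)
              i j u w (by omega) (by omega) hu hw
        · exact step i j u w hin (by omega) hu hw
      · by_cases hjn : j.1 < n
        · have := step j i w u hjn (by omega) hw hu
          exact ⟨fun h => ((this.mp h.symm)).symm, fun h => ((this.mpr h.symm)).symm⟩
        · have hij : i = j := Fin.ext (by omega)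
          subst hij
          exact same i (by omega) u w hu hw
  have rigid₁ : ∀ d : V → Fin 3, (∀ a b : V, H₁.Adj a b → d a ≠ d b) →
      ∀ u w : V, u ∈ H₁.verts → w ∈ H₁.verts → (d u = d w ↔ c u = c w) := by
    intro d hd u w hu hw
    rw [hverts] at hu hw
    obtain ⟨i, hu⟩ := Set.mem_iUnion.mp hu
    obtain ⟨j, hw⟩ := Set.mem_iUnion.mp hw
    exact key' t d (fun i' _ a b ha hb hne => hd a b (hadjT i' a b ha hb hne))
      i j u w (by omega) (by omega) hu hw
  -- criticality witness
  have crit : ∀ x y : V, G.Adj x y → s(x, y) ∉ G₀.edgeSet →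
      ∃ d : V → Fin 3, d x = d y ∧
        ∀ a b : V, G.Adj a b → s(a, b) ≠ s(x, y) → d a ≠ d b := by
    intro x y hxy hnotG₀
    have he : s(x, y) ∈ G.edgeSet := (SimpleGraph.mem_edgeSet G).mpr hxy
    have hnu := hcritical _ he
    have c₀ : (G.deleteEdges {s(x, y)}).Coloring (Fin 3) :=
      SimpleGraph.Coloring.mk (fun z => c z)
        (fun {a b} hab => c.valid ((SimpleGraph.deleteEdges_adj.mp hab).1))
    have hcol3 : (G.deleteEdges {s(x, y)}).Colorable 3 := ⟨c₀⟩
    have hnot2 : ¬ (G.deleteEdges {s(x, y)}).Colorable 2 := by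
      rintro ⟨d2⟩
      have hcol : G₀.coe.Colorable 2 := by
        refine ⟨SimpleGraph.Coloring.mk (fun z => d2 z.1) (fun {u w} hab => ?_)⟩
        refine d2.valid (SimpleGraph.deleteEdges_adj.mpr ⟨G₀.adj_sub hab, ?_⟩)
        intro hmem
        rw [Set.mem_singleton_iff] at hmem
        exact hnotG₀ (hmem ▸ (SimpleGraph.Subgraph.mem_edgeSet.mpr hab))
      have hle := hcol.chromaticNumber_le
      rw [h₀chrom] at hle
      exact absurd hle (by norm_num)
    have hchrom : (G.deleteEdges {s(x, y)}).chromaticNumber = (3 : ℕ) := by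
      refine le_antisymm hcol3.chromaticNumber_le ?_
      by_contra hlt
      push_neg at hlt
      have h23 : ((2 : ℕ) : ℕ∞) + 1 = ((3 : ℕ) : ℕ∞) := by norm_num
      have hle2 : (G.deleteEdges {s(x, y)}).chromaticNumber ≤ (2 : ℕ) :=
        (ENat.lt_add_one_iff (by simp)).mp (h23 ▸ hlt)
      exact hnot2 (chromaticNumber_le_iff_colorable.mp hle2)
    rw [UniquelyKColorable, not_and_or] at hnu
    rcases hnu with h | h
    · exact absurd hchrom h
    · push_neg at h
      obtain ⟨c₁, c₂, u, w, hiff'⟩ := h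
      have hiff : ¬(c₁ u = c₁ w ↔ c₂ u = c₂ w) := by tauto
      obtain ⟨c', hdiff⟩ : ∃ c' : (G.deleteEdges {s(x, y)}).Coloring (Fin 3),
          ¬(c' u = c' w ↔ c u = c w) := by
        by_cases h1 : c₁ u = c₁ w ↔ c u = c w
        · exact ⟨c₂, fun h2 => hiff (h1.trans h2.symm)⟩
        · exact ⟨c₁, h1⟩
      have hxy' : c' x = c' y := by
        by_contra hne
        have hvalid : ∀ {a b : V}, G.Adj a b → c' a ≠ c' b := by
          intro a b hab
          by_cases hs : s(a, b) = s(x, y)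
          · rcases Sym2.eq_iff.mp hs with ⟨rfl, rfl⟩ | ⟨rfl, rfl⟩
            · exact hne
            · exact fun h => hne h.symm
          · exact c'.valid (SimpleGraph.deleteEdges_adj.mpr ⟨hab, by simp [hs]⟩)
        exact hdiff (hGuniq (SimpleGraph.Coloring.mk (fun z => c' z) hvalid) c u w)
      refine ⟨fun z => c' z, hxy', ?_⟩
      intro a b hab hsne
      exact c'.valid (SimpleGraph.deleteEdges_adj.mpr ⟨hab, by simp [hsne]⟩)
  -- crux: G₀ and H₁ share at most one vertex
  -- criticality witness via H₁ (for edges possibly in G₀)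
  have fin2_pigeon : ∀ x y z : Fin 2, x ≠ y → x ≠ z → y ≠ z → False := by decide
  have critH : ∀ x y : V, G.Adj x y → s(x, y) ∉ H₁.edgeSet →
      ∃ d : V → Fin 3, d x = d y ∧
        ∀ a b : V, G.Adj a b → s(a, b) ≠ s(x, y) → d a ≠ d b := by
    intro x y hxy hnotH₁
    have he : s(x, y) ∈ G.edgeSet := (SimpleGraph.mem_edgeSet G).mpr hxy
    have hnu := hcritical _ he
    have c₀ : (G.deleteEdges {s(x, y)}).Coloring (Fin 3) :=
      SimpleGraph.Coloring.mk (fun z => c z)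
        (fun {a b} hab => c.valid ((SimpleGraph.deleteEdges_adj.mp hab).1))
    have hcol3 : (G.deleteEdges {s(x, y)}).Colorable 3 := ⟨c₀⟩
    obtain ⟨z₁, z₂, z₃, h12, h13, h23, hTeq⟩ := Finset.card_eq_three.mp (hTcl 0).2
    have hz₁ : z₁ ∈ T 0 := by rw [hTeq]; simp
    have hz₂ : z₂ ∈ T 0 := by rw [hTeq]; simp
    have hz₃ : z₃ ∈ T 0 := by rw [hTeq]; simp
    have hGeAdj : ∀ a b : V, a ∈ T 0 → b ∈ T 0 → a ≠ b →
        (G.deleteEdges {s(x, y)}).Adj a b := by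
      intro a b ha hb hne
      refine SimpleGraph.deleteEdges_adj.mpr ⟨(hTcl 0).1 ha hb hne, ?_⟩
      intro hs
      rw [Set.mem_singleton_iff] at hs
      exact hnotH₁ (hs ▸ SimpleGraph.Subgraph.mem_edgeSet.mpr (hadjT 0 a b ha hb hne))
    have hnot2 : ¬ (G.deleteEdges {s(x, y)}).Colorable 2 := by
      rintro ⟨d2⟩
      exact fin2_pigeon (d2 z₁) (d2 z₂) (d2 z₃)
        (d2.valid (hGeAdj z₁ z₂ hz₁ hz₂ h12))
        (d2.valid (hGeAdj z₁ z₃ hz₁ hz₃ h13))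
        (d2.valid (hGeAdj z₂ z₃ hz₂ hz₃ h23))
    have hchrom : (G.deleteEdges {s(x, y)}).chromaticNumber = (3 : ℕ) := by
      refine le_antisymm hcol3.chromaticNumber_le ?_
      by_contra hlt
      push_neg at hlt
      have h23' : ((2 : ℕ) : ℕ∞) + 1 = ((3 : ℕ) : ℕ∞) := by norm_num
      have hle2 : (G.deleteEdges {s(x, y)}).chromaticNumber ≤ (2 : ℕ) :=
        (ENat.lt_add_one_iff (by simp)).mp (h23' ▸ hlt)
      exact hnot2 (chromaticNumber_le_iff_colorable.mp hle2)
    rw [UniquelyKColorable, not_and_or] at hnu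
    rcases hnu with h | h
    · exact absurd hchrom h
    · push_neg at h
      obtain ⟨c₁, c₂, u, w, hiff'⟩ := h
      have hiff : ¬(c₁ u = c₁ w ↔ c₂ u = c₂ w) := by tauto
      obtain ⟨c', hdiff⟩ : ∃ c' : (G.deleteEdges {s(x, y)}).Coloring (Fin 3),
          ¬(c' u = c' w ↔ c u = c w) := by
        by_cases h1 : c₁ u = c₁ w ↔ c u = c w
        · exact ⟨c₂, fun h2 => hiff (h1.trans h2.symm)⟩
        · exact ⟨c₁, h1⟩
      have hxy' : c' x = c' y := by
        by_contra hne
        have hvalid : ∀ {a b : V}, G.Adj a b → c' a ≠ c' b := by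
          intro a b hab
          by_cases hs : s(a, b) = s(x, y)
          · rcases Sym2.eq_iff.mp hs with ⟨rfl, rfl⟩ | ⟨rfl, rfl⟩
            · exact hne
            · exact fun h => hne h.symm
          · exact c'.valid (SimpleGraph.deleteEdges_adj.mpr ⟨hab, by simp [hs]⟩)
        exact hdiff (hGuniq (SimpleGraph.Coloring.mk (fun z => c' z) hvalid) c u w)
      refine ⟨fun z => c' z, hxy', ?_⟩
      intro a b hab hsne
      exact c'.valid (SimpleGraph.deleteEdges_adj.mpr ⟨hab, by simp [hsne]⟩)
  -- the chain lemma: a well-chosen H₁-edge is rigid given the pin at v,w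
  have chainL : ∀ n : ℕ, ∀ v w : V,
      (∃ i : Fin (t + 1), i.1 ≤ n ∧ v ∈ T i) → (∃ i : Fin (t + 1), i.1 ≤ n ∧ w ∈ T i) →
      ¬ G.Adj v w → v ≠ w →
      ∃ (p' q' : V) (k : Fin (t + 1)), k.1 ≤ n ∧ p' ∈ T k ∧ q' ∈ T k ∧ p' ≠ q' ∧
        ∀ d : V → Fin 3,
          (∀ i : Fin (t + 1), i.1 ≤ n → ∀ a b : V, a ∈ T i → b ∈ T i → a ≠ b →
            s(a, b) ≠ s(p', q') → d a ≠ d b) →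
          (d v = d w ↔ c v = c w) → d p' ≠ d q' := by
    intro n
    induction n using Nat.strong_induction_on with
    | _ n IH =>
      have handle : ∀ v w : V,
          (∃ i : Fin (t + 1), i.1 ≤ n ∧ v ∈ T i) →
          ¬ G.Adj v w → v ≠ w →
          (¬ ∃ i : Fin (t + 1), i.1 ≤ n - 1 ∧ v ∈ T i) →
          (∃ i : Fin (t + 1), i.1 ≤ n - 1 ∧ w ∈ T i) →
          1 ≤ n →
          ∃ (p' q' : V) (k : Fin (t + 1)), k.1 ≤ n ∧ p' ∈ T k ∧ q' ∈ T k ∧ p' ≠ q' ∧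
            ∀ d : V → Fin 3,
              (∀ i : Fin (t + 1), i.1 ≤ n → ∀ a b : V, a ∈ T i → b ∈ T i → a ≠ b →
                s(a, b) ≠ s(p', q') → d a ≠ d b) →
              (d v = d w ↔ c v = c w) → d p' ≠ d q' := by
        rintro v w hv hnadj hvw hvlow ⟨iw, hiwle, hiw⟩ hn1
        obtain ⟨jv, hjvle, hjv⟩ := hv
        have hjvn : jv.1 = n := by
          by_contra h
          exact hvlow ⟨jv, by omega, hjv⟩
        have hj0 : jv ≠ 0 := by
          intro h
          rw [h] at hjvn
          simp at hjvn
          omega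
        obtain ⟨i₀, hi₀lt, hcard⟩ := hTchain jv hj0
        obtain ⟨p, q, hpq, hset⟩ := Set.ncard_eq_two.mp hcard
        have hpmem : p ∈ (T i₀ : Set V) ∩ (T jv : Set V) := by rw [hset]; left; rfl
        have hqmem : q ∈ (T i₀ : Set V) ∩ (T jv : Set V) := by rw [hset]; right; rfl
        have hpi₀ : p ∈ T i₀ := hpmem.1
        have hpj : p ∈ T jv := hpmem.2
        have hqi₀ : q ∈ T i₀ := hqmem.1
        have hqj : q ∈ T jv := hqmem.2
        have hi₀n : i₀.1 ≤ n - 1 := by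
          have : i₀.1 < jv.1 := hi₀lt
          omega
        have hvp : v ≠ p := fun h => hvlow ⟨i₀, hi₀n, h ▸ hpi₀⟩
        have hvq : v ≠ q := fun h => hvlow ⟨i₀, hi₀n, h ▸ hqi₀⟩
        have hcvp : c v ≠ c p := c.valid ((hTcl jv).1 hjv hpj hvp)
        have hcvq : c v ≠ c q := c.valid ((hTcl jv).1 hjv hqj hvq)
        have hcpq : c p ≠ c q := c.valid ((hTcl jv).1 hpj hqj hpq)
        have hdpre : ∀ z : V, ∀ d : V → Fin 3,
            (∀ i : Fin (t + 1), i.1 ≤ n → ∀ a b : V, a ∈ T i → b ∈ T i → a ≠ b →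
              s(a, b) ≠ s(v, z) → d a ≠ d b) →
            (∀ i : Fin (t + 1), i.1 ≤ n - 1 → ∀ a b : V, a ∈ T i → b ∈ T i → a ≠ b →
              d a ≠ d b) := by
          intro z d hd i hi a b ha hb hne
          refine hd i (by omega) a b ha hb hne ?_
          intro hs
          rcases Sym2.eq_iff.mp hs with ⟨rfl, rfl⟩ | ⟨rfl, rfl⟩
          · exact hvlow ⟨i, hi, ha⟩
          · exact hvlow ⟨i, hi, hb⟩
        by_cases hwp : c w = c p
        · refine ⟨v, p, jv, by omega, hjv, hpj, hvp, ?_⟩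
          intro d hd hpin hdvz
          have hwz : d w = d p :=
            (key' (n - 1) d (hdpre p d hd) iw i₀ w p (by omega) (by omega) hiw hpi₀).mpr hwp
          exact hcvp ((hpin.mp (hdvz.trans hwz.symm)).trans hwp)
        by_cases hwq : c w = c q
        · refine ⟨v, q, jv, by omega, hjv, hqj, hvq, ?_⟩
          intro d hd hpin hdvz
          have hwz : d w = d q :=
            (key' (n - 1) d (hdpre q d hd) iw i₀ w q (by omega) (by omega) hiw hqi₀).mpr hwq
          exact hcvq ((hpin.mp (hdvz.trans hwz.symm)).trans hwq)
        · have hwv : c w = c v :=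
            fin3_third (c p) (c q) (c v) (c w) hcpq hcvp hcvq hwp hwq
          refine ⟨v, p, jv, by omega, hjv, hpj, hvp, ?_⟩
          intro d hd hpin hdvz
          have hwnz : d w ≠ d p := fun h =>
            hwp ((key' (n - 1) d (hdpre p d hd) iw i₀ w p (by omega) (by omega) hiw hpi₀).mp h)
          exact hwnz ((hpin.mpr hwv.symm).symm.trans hdvz)
      intro v w hv hw hnadj hvw
      by_cases hn0 : n = 0
      · subst hn0
        obtain ⟨iv, hivle, hiv⟩ := hv
        obtain ⟨iw, hiwle, hiw⟩ := hw
        have hij : iv = iw := Fin.ext (by omega)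
        exact absurd ((hTcl iw).1 (hij ▸ hiv) hiw hvw) hnadj
      · by_cases hvlow : ∃ i : Fin (t + 1), i.1 ≤ n - 1 ∧ v ∈ T i
        · by_cases hwlow : ∃ i : Fin (t + 1), i.1 ≤ n - 1 ∧ w ∈ T i
          · obtain ⟨p', q', k, hk, h1, h2, h3, hprop⟩ :=
              IH (n - 1) (by omega) v w hvlow hwlow hnadj hvw
            exact ⟨p', q', k, by omega, h1, h2, h3,
              fun d hd hpin => hprop d (fun i hi => hd i (by omega)) hpin⟩
          · obtain ⟨p', q', k, hk, h1, h2, h3, hprop⟩ :=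
              handle w v hw (fun h => hnadj h.symm) (Ne.symm hvw) hwlow hvlow (by omega)
            refine ⟨p', q', k, hk, h1, h2, h3, ?_⟩
            intro d hd hpin
            exact hprop d hd
              ⟨fun h => (hpin.mp h.symm).symm, fun h => (hpin.mpr h.symm).symm⟩
        · have hwlow : ∃ i : Fin (t + 1), i.1 ≤ n - 1 ∧ w ∈ T i := by
            by_contra hwl
            obtain ⟨iv, hivle, hiv⟩ := hv
            obtain ⟨iw, hiwle, hiw⟩ := hw
            have hivn : iv.1 = n := by
              by_contra h
              exact hvlow ⟨iv, by omega, hiv⟩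
            have hiwn : iw.1 = n := by
              by_contra h
              exact hwl ⟨iw, by omega, hiw⟩
            have hij : iv = iw := Fin.ext (by omega)
            exact absurd ((hTcl iw).1 (hij ▸ hiv) hiw hvw) hnadj
          exact handle v w hv hnadj hvw hvlow hwlow (by omega)
  -- crux: G₀ and H₁ share at most one vertex
  have crux : ∀ w₁ w₂ : V, w₁ ∈ G₀.verts → w₁ ∈ H₁.verts →
      w₂ ∈ G₀.verts → w₂ ∈ H₁.verts → w₁ = w₂ := by
    intro v w hvG hvH hwG hwH
    by_contra hvw
    have hnadj : ¬ G.Adj v w := by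
      intro hadj
      by_cases hin : s(v, w) ∈ G₀.edgeSet
      · have hinH : s(v, w) ∉ H₁.edgeSet := by
          intro h
          have hmem : s(v, w) ∈ G₀.edgeSet ∩ H₁.edgeSet := ⟨hin, h⟩
          rw [hdisj] at hmem
          exact hmem
        obtain ⟨d, hdvw, hdprop⟩ := critH v w hadj hinH
        have R := rigid₁ d (fun a b hab => hdprop a b (H₁.adj_sub hab)
          (fun hs => hinH (hs ▸ SimpleGraph.Subgraph.mem_edgeSet.mpr hab)))
        exact c.valid hadj ((R v w hvH hwH).mp hdvw)
      · obtain ⟨d, hdvw, hdprop⟩ := crit v w hadj hin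
        have R := rigid₀ d (fun a b hab => hdprop a b (G₀.adj_sub hab)
          (fun hs => hin (hs ▸ SimpleGraph.Subgraph.mem_edgeSet.mpr hab)))
        exact c.valid hadj ((R v w hvG hwG).mp hdvw)
    have hvT : ∃ i : Fin (t + 1), i.1 ≤ t ∧ v ∈ T i := by
      have hvH' := hvH
      rw [hverts] at hvH'
      obtain ⟨i, hi⟩ := Set.mem_iUnion.mp hvH'
      exact ⟨i, by omega, hi⟩
    have hwT : ∃ i : Fin (t + 1), i.1 ≤ t ∧ w ∈ T i := by
      have hwH' := hwH
      rw [hverts] at hwH'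
      obtain ⟨i, hi⟩ := Set.mem_iUnion.mp hwH'
      exact ⟨i, by omega, hi⟩
    obtain ⟨p', q', k, hk, hp'k, hq'k, hp'q', hprop⟩ := chainL t v w hvT hwT hnadj hvw
    have hadjpq : G.Adj p' q' := (hTcl k).1 hp'k hq'k hp'q'
    have hH₁pq : s(p', q') ∈ H₁.edgeSet :=
      SimpleGraph.Subgraph.mem_edgeSet.mpr (hadjT k p' q' hp'k hq'k hp'q')
    have hG₀pq : s(p', q') ∉ G₀.edgeSet := by
      intro h
      have hmem : s(p', q') ∈ G₀.edgeSet ∩ H₁.edgeSet := ⟨h, hH₁pq⟩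
      rw [hdisj] at hmem
      exact hmem
    obtain ⟨d, hdpq, hdprop⟩ := crit p' q' hadjpq hG₀pq
    have R₀ := rigid₀ d (fun a b hab => hdprop a b (G₀.adj_sub hab)
      (fun hs => hG₀pq (hs ▸ SimpleGraph.Subgraph.mem_edgeSet.mpr hab)))
    exact hprop d
      (fun i hi a b ha hb hne hs => hdprop a b ((hTcl i).1 ha hb hne) hs)
      (R₀ v w hvG hwG) hdpq
  constructor
  · -- common vertex case
    intro v hv
    have hss : (edgesBetween G (G₀.verts \ {v}) (H₁.verts \ {v})).Subsingleton := by
      intro e₁ he₁ e₂ he₂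
      obtain ⟨x₁, hx₁A, y₁, hy₁B, hadj₁, he₁eq⟩ := he₁
      obtain ⟨x₂, hx₂A, y₂, hy₂B, hadj₂, he₂eq⟩ := he₂
      obtain ⟨hx₁v, hx₁ne⟩ := hx₁A
      obtain ⟨hy₁v, hy₁ne⟩ := hy₁B
      obtain ⟨hx₂v, hx₂ne⟩ := hx₂A
      obtain ⟨hy₂v, hy₂ne⟩ := hy₂B
      rw [Set.mem_singleton_iff] at hx₁ne hy₁ne hx₂ne hy₂ne
      by_contra hne
      rw [he₁eq, he₂eq] at hne
      -- cleanliness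
      have hy₁G₀ : y₁ ∉ G₀.verts := fun h => hy₁ne (crux y₁ v h hy₁v hv.1 hv.2)
      have hy₂G₀ : y₂ ∉ G₀.verts := fun h => hy₂ne (crux y₂ v h hy₂v hv.1 hv.2)
      have hx₁H₁ : x₁ ∉ H₁.verts := fun h => hx₁ne (crux x₁ v hx₁v h hv.1 hv.2)
      have hx₂H₁ : x₂ ∉ H₁.verts := fun h => hx₂ne (crux x₂ v hx₂v h hv.1 hv.2)
      have hne₁ : s(x₁, y₁) ∉ G₀.edgeSet := fun h => hy₁G₀ (SimpleGraph.Subgraph.Adj.snd_mem h)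
      have hne₂ : s(x₂, y₂) ∉ G₀.edgeSet := fun h => hy₂G₀ (SimpleGraph.Subgraph.Adj.snd_mem h)
      obtain ⟨d₁, hd₁xy, hd₁prop⟩ := crit x₁ y₁ hadj₁ hne₁
      obtain ⟨d₂, hd₂xy, hd₂prop⟩ := crit x₂ y₂ hadj₂ hne₂
      have edgeNe₀ : ∀ (x y : V), y ∉ G₀.verts → ∀ a b : V, G₀.Adj a b → s(a, b) ≠ s(x, y) := by
        intro x y hy a b hab hs
        rcases Sym2.eq_iff.mp hs with ⟨rfl, rfl⟩ | ⟨rfl, rfl⟩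
        · exact hy hab.snd_mem
        · exact hy hab.fst_mem
      have edgeNe₁ : ∀ (x y : V), x ∉ H₁.verts → ∀ a b : V, H₁.Adj a b → s(a, b) ≠ s(x, y) := by
        intro x y hx a b hab hs
        rcases Sym2.eq_iff.mp hs with ⟨rfl, rfl⟩ | ⟨rfl, rfl⟩
        · exact hx hab.fst_mem
        · exact hx hab.snd_mem
      have R₀₁ := rigid₀ d₁ (fun a b hab =>
        hd₁prop a b (G₀.adj_sub hab) (edgeNe₀ x₁ y₁ hy₁G₀ a b hab))
      have R₁₁ := rigid₁ d₁ (fun a b hab =>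
        hd₁prop a b (H₁.adj_sub hab) (edgeNe₁ x₁ y₁ hx₁H₁ a b hab))
      have R₀₂ := rigid₀ d₂ (fun a b hab =>
        hd₂prop a b (G₀.adj_sub hab) (edgeNe₀ x₂ y₂ hy₂G₀ a b hab))
      have R₁₂ := rigid₁ d₂ (fun a b hab =>
        hd₂prop a b (H₁.adj_sub hab) (edgeNe₁ x₂ y₂ hx₂H₁ a b hab))
      have hcx₁v : c x₁ ≠ c v := by
        intro h
        have h1 : d₁ x₁ = d₁ v := (R₀₁ x₁ v hx₁v hv.1).mpr h
        have h2 : d₁ y₁ = d₁ v := hd₁xy.symm.trans h1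
        have h3 : c y₁ = c v := (R₁₁ y₁ v hy₁v hv.2).mp h2
        exact c.valid hadj₁ (h.trans h3.symm)
      have hcy₁v : c y₁ ≠ c v := by
        intro h
        have h1 : d₁ y₁ = d₁ v := (R₁₁ y₁ v hy₁v hv.2).mpr h
        have h2 : d₁ x₁ = d₁ v := hd₁xy.trans h1
        have h3 : c x₁ = c v := (R₀₁ x₁ v hx₁v hv.1).mp h2
        exact c.valid hadj₁ (h3.trans h.symm)
      have hcx₂v : c x₂ ≠ c v := by
        intro h
        have h1 : d₂ x₂ = d₂ v := (R₀₂ x₂ v hx₂v hv.1).mpr h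
        have h2 : d₂ y₂ = d₂ v := hd₂xy.symm.trans h1
        have h3 : c y₂ = c v := (R₁₂ y₂ v hy₂v hv.2).mp h2
        exact c.valid hadj₂ (h.trans h3.symm)
      have hcy₂v : c y₂ ≠ c v := by
        intro h
        have h1 : d₂ y₂ = d₂ v := (R₁₂ y₂ v hy₂v hv.2).mpr h
        have h2 : d₂ x₂ = d₂ v := hd₂xy.trans h1
        have h3 : c x₂ = c v := (R₀₂ x₂ v hx₂v hv.1).mp h2
        exact c.valid hadj₂ (h3.trans h.symm)
      have hcxy₁ : c x₁ ≠ c y₁ := c.valid hadj₁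
      have hcxy₂ : c x₂ ≠ c y₂ := c.valid hadj₂
      have hP : d₁ x₂ ≠ d₁ y₂ := hd₁prop x₂ y₂ hadj₂ (Ne.symm hne)
      by_cases hxx : c x₂ = c x₁
      · have hyy : c y₂ = c y₁ :=
          fin3_eq (c x₁) (c v) (c y₂) (c y₁) hcx₁v
            (fun h => hcxy₂ (hxx.trans h.symm)) hcy₂v hcxy₁.symm.symm.symm hcy₁v
        exact hP (((R₀₁ x₂ x₁ hx₂v hx₁v).mpr hxx).trans
          (hd₁xy.trans ((R₁₁ y₂ y₁ hy₂v hy₁v).mpr hyy).symm))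
      · have hx₂y₁ : c x₂ = c y₁ :=
          fin3_third (c x₁) (c v) (c y₁) (c x₂) hcx₁v hcxy₁.symm.symm.symm hcy₁v hxx hcx₂v
        have hy₂x₁ : c y₂ = c x₁ :=
          fin3_third (c y₁) (c v) (c x₁) (c y₂) hcy₁v hcxy₁ hcx₁v
            (fun h => hcxy₂ (hx₂y₁.trans h.symm)) hcy₂v
        have hAB : d₁ x₁ ≠ d₁ v := fun h => hcx₁v ((R₀₁ x₁ v hx₁v hv.1).mp h)
        have h1 : d₁ x₂ ≠ d₁ v := fun h => hcx₂v ((R₀₁ x₂ v hx₂v hv.1).mp h)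
        have h2 : d₁ x₂ ≠ d₁ x₁ := fun h => hxx ((R₀₁ x₂ x₁ hx₂v hx₁v).mp h)
        have h3 : d₁ y₂ ≠ d₁ v := fun h =>
          hcx₁v (hy₂x₁.symm.trans ((R₁₁ y₂ v hy₂v hv.2).mp h))
        have h4 : d₁ y₂ ≠ d₁ x₁ := by
          intro h
          have h' : d₁ y₂ = d₁ y₁ := h.trans hd₁xy
          exact hcxy₁ (hy₂x₁.symm.trans ((R₁₁ y₂ y₁ hy₂v hy₁v).mp h'))
        exact hP (fin3_eq (d₁ x₁) (d₁ v) (d₁ x₂) (d₁ y₂) hAB h2 h1 h4 h3)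
    rcases hss.eq_empty_or_singleton with h | ⟨a, h⟩ <;> simp [h, Set.ncard_empty, Set.ncard_singleton]
  · -- disjoint case
    intro hI
    by_contra hgt
    push_neg at hgt
    set S := edgesBetween G G₀.verts H₁.verts with hS
    have hF : S.Finite := by
      by_contra hinf
      rw [Set.Infinite.ncard hinf] at hgt
      omega
    obtain ⟨E₁, hE₁⟩ := Set.nonempty_of_ncard_ne_zero (s := S) (by omega)
    have hn₁ : (S \ {E₁}).ncard = S.ncard - 1 := Set.ncard_diff_singleton_of_mem hE₁
    have hF₁ : (S \ {E₁}).Finite := hF.diff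
    obtain ⟨E₂, hE₂⟩ := Set.nonempty_of_ncard_ne_zero (s := S \ {E₁}) (by omega)
    have hn₂ : ((S \ {E₁}) \ {E₂}).ncard = (S \ {E₁}).ncard - 1 :=
      Set.ncard_diff_singleton_of_mem hE₂
    have hF₂ : ((S \ {E₁}) \ {E₂}).Finite := hF₁.diff
    obtain ⟨E₃, hE₃⟩ := Set.nonempty_of_ncard_ne_zero (s := (S \ {E₁}) \ {E₂}) (by omega)
    have hn₃ : (((S \ {E₁}) \ {E₂}) \ {E₃}).ncard = ((S \ {E₁}) \ {E₂}).ncard - 1 :=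
      Set.ncard_diff_singleton_of_mem hE₃
    obtain ⟨E₄, hE₄⟩ :=
      Set.nonempty_of_ncard_ne_zero (s := ((S \ {E₁}) \ {E₂}) \ {E₃}) (by omega)
    -- memberships and distinctness
    have hE₂S : E₂ ∈ S := hE₂.1
    have hE₃S : E₃ ∈ S := hE₃.1.1
    have hE₄S : E₄ ∈ S := hE₄.1.1.1
    have h21 : E₂ ≠ E₁ := by have := hE₂.2; simpa using this
    have h31 : E₃ ≠ E₁ := by have := hE₃.1.2; simpa using this
    have h32 : E₃ ≠ E₂ := by have := hE₃.2; simpa using this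
    have h41 : E₄ ≠ E₁ := by have := hE₄.1.1.2; simpa using this
    have h42 : E₄ ≠ E₂ := by have := hE₄.1.2; simpa using this
    have h43 : E₄ ≠ E₃ := by have := hE₄.2; simpa using this
    obtain ⟨x₁, hx₁v, y₁, hy₁v, hadj₁, hEeq₁⟩ := hE₁
    obtain ⟨x₂, hx₂v, y₂, hy₂v, hadj₂, hEeq₂⟩ := hE₂S
    obtain ⟨x₃, hx₃v, y₃, hy₃v, hadj₃, hEeq₃⟩ := hE₃S
    obtain ⟨x₄, hx₄v, y₄, hy₄v, hadj₄, hEeq₄⟩ := hE₄S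
    have hclean : ∀ z : V, z ∈ G₀.verts → z ∉ H₁.verts := by
      intro z hz hz'
      have : z ∈ G₀.verts ∩ H₁.verts := ⟨hz, hz'⟩
      rw [hI] at this
      exact this
    have hy₁G₀ : y₁ ∉ G₀.verts := fun h => hclean y₁ h hy₁v
    have hy₂G₀ : y₂ ∉ G₀.verts := fun h => hclean y₂ h hy₂v
    have hy₃G₀ : y₃ ∉ G₀.verts := fun h => hclean y₃ h hy₃v
    have hy₄G₀ : y₄ ∉ G₀.verts := fun h => hclean y₄ h hy₄v
    have hx₁H₁ : x₁ ∉ H₁.verts := fun h => hclean x₁ hx₁v h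
    have hx₂H₁ : x₂ ∉ H₁.verts := fun h => hclean x₂ hx₂v h
    have hx₃H₁ : x₃ ∉ H₁.verts := fun h => hclean x₃ hx₃v h
    have hx₄H₁ : x₄ ∉ H₁.verts := fun h => hclean x₄ hx₄v h
    obtain ⟨d₁, hd₁xy, hd₁prop⟩ := crit x₁ y₁ hadj₁
      (fun h => hy₁G₀ (SimpleGraph.Subgraph.Adj.snd_mem h))
    obtain ⟨d₂, hd₂xy, hd₂prop⟩ := crit x₂ y₂ hadj₂
      (fun h => hy₂G₀ (SimpleGraph.Subgraph.Adj.snd_mem h))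
    obtain ⟨d₃, hd₃xy, hd₃prop⟩ := crit x₃ y₃ hadj₃
      (fun h => hy₃G₀ (SimpleGraph.Subgraph.Adj.snd_mem h))
    obtain ⟨d₄, hd₄xy, hd₄prop⟩ := crit x₄ y₄ hadj₄
      (fun h => hy₄G₀ (SimpleGraph.Subgraph.Adj.snd_mem h))
    have edgeNe₀ : ∀ (x y : V), y ∉ G₀.verts → ∀ a b : V, G₀.Adj a b → s(a, b) ≠ s(x, y) := by
      intro x y hy a b hab hs
      rcases Sym2.eq_iff.mp hs with ⟨rfl, rfl⟩ | ⟨rfl, rfl⟩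
      · exact hy hab.snd_mem
      · exact hy hab.fst_mem
    have edgeNe₁ : ∀ (x y : V), x ∉ H₁.verts → ∀ a b : V, H₁.Adj a b → s(a, b) ≠ s(x, y) := by
      intro x y hx a b hab hs
      rcases Sym2.eq_iff.mp hs with ⟨rfl, rfl⟩ | ⟨rfl, rfl⟩
      · exact hx hab.fst_mem
      · exact hx hab.snd_mem
    -- package as Fin 4 indexed data
    let X : Fin 4 → V := ![x₁, x₂, x₃, x₄]
    let Y : Fin 4 → V := ![y₁, y₂, y₃, y₄]
    let D : Fin 4 → V → Fin 3 := ![d₁, d₂, d₃, d₄]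
    have hXmem : ∀ i, X i ∈ G₀.verts := by
      intro i; fin_cases i <;> assumption
    have hYmem : ∀ i, Y i ∈ H₁.verts := by
      intro i; fin_cases i <;> assumption
    have hadj' : ∀ i, G.Adj (X i) (Y i) := by
      intro i; fin_cases i <;> assumption
    have hDxy : ∀ m, D m (X m) = D m (Y m) := by
      intro m; fin_cases m <;> assumption
    have hDprop : ∀ m, ∀ a b : V, G.Adj a b → s(a, b) ≠ s(X m, Y m) → D m a ≠ D m b := by
      intro m; fin_cases m <;> assumption
    have hs12 : s(x₁, y₁) ≠ s(x₂, y₂) := by rw [← hEeq₁, ← hEeq₂]; exact h21.symm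
    have hs13 : s(x₁, y₁) ≠ s(x₃, y₃) := by rw [← hEeq₁, ← hEeq₃]; exact h31.symm
    have hs14 : s(x₁, y₁) ≠ s(x₄, y₄) := by rw [← hEeq₁, ← hEeq₄]; exact h41.symm
    have hs23 : s(x₂, y₂) ≠ s(x₃, y₃) := by rw [← hEeq₂, ← hEeq₃]; exact h32.symm
    have hs24 : s(x₂, y₂) ≠ s(x₄, y₄) := by rw [← hEeq₂, ← hEeq₄]; exact h42.symm
    have hs34 : s(x₃, y₃) ≠ s(x₄, y₄) := by rw [← hEeq₃, ← hEeq₄]; exact h43.symm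
    have hEdist : ∀ i j, i ≠ j → s(X i, Y i) ≠ s(X j, Y j) := by
      intro i j hij
      fin_cases i <;> fin_cases j <;>
        first
          | exact absurd rfl hij
          | exact hs12 | exact hs12.symm | exact hs13 | exact hs13.symm
          | exact hs14 | exact hs14.symm | exact hs23 | exact hs23.symm
          | exact hs24 | exact hs24.symm | exact hs34 | exact hs34.symm
    have hR₀ : ∀ m, ∀ u w : V, u ∈ G₀.verts → w ∈ G₀.verts →
        (D m u = D m w ↔ c u = c w) := by
      intro m
      fin_cases m
      · exact rigid₀ d₁ (fun a b hab => hd₁prop a b (G₀.adj_sub hab) (edgeNe₀ x₁ y₁ hy₁G₀ a b hab))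
      · exact rigid₀ d₂ (fun a b hab => hd₂prop a b (G₀.adj_sub hab) (edgeNe₀ x₂ y₂ hy₂G₀ a b hab))
      · exact rigid₀ d₃ (fun a b hab => hd₃prop a b (G₀.adj_sub hab) (edgeNe₀ x₃ y₃ hy₃G₀ a b hab))
      · exact rigid₀ d₄ (fun a b hab => hd₄prop a b (G₀.adj_sub hab) (edgeNe₀ x₄ y₄ hy₄G₀ a b hab))
    have hR₁ : ∀ m, ∀ u w : V, u ∈ H₁.verts → w ∈ H₁.verts →
        (D m u = D m w ↔ c u = c w) := by
      intro m
      fin_cases m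
      · exact rigid₁ d₁ (fun a b hab => hd₁prop a b (H₁.adj_sub hab) (edgeNe₁ x₁ y₁ hx₁H₁ a b hab))
      · exact rigid₁ d₂ (fun a b hab => hd₂prop a b (H₁.adj_sub hab) (edgeNe₁ x₂ y₂ hx₂H₁ a b hab))
      · exact rigid₁ d₃ (fun a b hab => hd₃prop a b (H₁.adj_sub hab) (edgeNe₁ x₃ y₃ hx₃H₁ a b hab))
      · exact rigid₁ d₄ (fun a b hab => hd₄prop a b (H₁.adj_sub hab) (edgeNe₁ x₄ y₄ hx₄H₁ a b hab))
    exact core4 (fun i => c (X i)) (fun i => c (Y i))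
      (fun m i => D m (X i)) (fun m i => D m (Y i))
      hDxy
      (fun m i him => hDprop m (X i) (Y i) (hadj' i) (hEdist i m him))
      (fun m i j => hR₀ m (X i) (X j) (hXmem i) (hXmem j))
      (fun m i j => hR₁ m (Y i) (Y j) (hYmem i) (hYmem j))
      (fun i => c.valid (hadj' i))
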